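/- The number of proper k-trees (plane trees with exactly k labelled leaves, whose root has outdegree 1 and all other internal vertices have outdegree 2) equals 2^{k-1} · ∏_{i=1}^{k-1} (2i-1). -/

import Mathlib

/-- Plane binary trees with leaves labelled by `Fin k`.  A proper `k`-tree is such a
tree planted below an extra root of outdegree 1 (which does not affect the count),
whose `k` leaves carry the labels `1, …, k` bijectively. -/
inductive PTree (k : ℕ) : Type
  | leaf : Fin k → PTree k
  | node : PTree k → PTree k → PTree k

namespace PTree

/-- The list of leaf labels, from left to right. -/
def labels {k : ℕ} : PTree k → List (Fin k)
  | .leaf i => [i]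
  | .node l r => l.labels ++ r.labels

/-- A proper `k`-tree: every label in `Fin k` occurs exactly once among the leaves. -/
def IsProper {k : ℕ} (t : PTree k) : Prop := t.labels.Nodup ∧ t.labels.length = k

end PTree

namespace PTreeAux

open PTree

/-- The unlabelled shape of a `PTree`. -/
def shape {k : ℕ} : PTree k → Tree Unit
  | .leaf _ => Tree.nil
  | .node l r => Tree.node () (shape l) (shape r)

theorem numLeaves_shape {k : ℕ} (t : PTree k) : (shape t).numLeaves = t.labels.length := by
  induction t with
  | leaf i => rfl
  | node l r hl hr => simp [shape, labels, Tree.numLeaves, hl, hr]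

/-- Rebuild a `PTree` from a shape and a list of labels. -/
def build {k : ℕ} (d : Fin k) : Tree Unit → List (Fin k) → PTree k
  | BinaryTree.nil, l => .leaf (l.getD 0 d)
  | BinaryTree.node _ a b, l =>
      .node (build d a (l.take a.numLeaves)) (build d b (l.drop a.numLeaves))

theorem labels_build {k : ℕ} (d : Fin k) (s : Tree Unit) (l : List (Fin k))
    (h : l.length = s.numLeaves) : (build d s l).labels = l := by
  induction s generalizing l with
  | nil =>
      simp [Tree.numLeaves] at h
      match l, h with
      | [x], _ => rfl
  | node _ a b ha hb =>
      simp [Tree.numLeaves] at h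
      have h1 : (l.take a.numLeaves).length = a.numLeaves := by
        simp [List.length_take]; omega
      have h2 : (l.drop a.numLeaves).length = b.numLeaves := by
        simp [List.length_drop]; omega
      simp [build, labels, ha _ h1, hb _ h2]

theorem shape_build {k : ℕ} (d : Fin k) (s : Tree Unit) (l : List (Fin k))
    (h : l.length = s.numLeaves) : shape (build d s l) = s := by
  induction s generalizing l with
  | nil => rfl
  | node _ a b ha hb =>
      simp [Tree.numLeaves] at h
      have h1 : (l.take a.numLeaves).length = a.numLeaves := by
        simp [List.length_take]; omega
      have h2 : (l.drop a.numLeaves).length = b.numLeaves := by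
        simp [List.length_drop]; omega
      simp [build, shape, ha _ h1, hb _ h2]

theorem build_shape_labels {k : ℕ} (d : Fin k) (t : PTree k) :
    build d (shape t) t.labels = t := by
  induction t with
  | leaf i => rfl
  | node l r hl hr =>
      have h : (shape l).numLeaves = l.labels.length := numLeaves_shape l
      simp only [shape, labels, build, h, List.take_left, List.drop_left, hl, hr]

/-- Proper trees are shape together with a nodup full list of labels. -/
noncomputable def properEquiv (k : ℕ) (d : Fin k) :
    {t : PTree k // t.IsProper} ≃
      {s : Tree Unit // s.numLeaves = k} × {l : List (Fin k) // l.Nodup ∧ l.length = k} where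
  toFun t := ⟨⟨shape t.1, by rw [numLeaves_shape]; exact t.2.2⟩, ⟨t.1.labels, t.2⟩⟩
  invFun p := ⟨build d p.1.1 p.2.1, by
    rw [IsProper, labels_build d _ _ (by rw [p.2.2.2, p.1.2])]; exact p.2.2⟩
  left_inv t := by simp [build_shape_labels]
  right_inv p := by
    have h : p.2.1.length = p.1.1.numLeaves := by rw [p.2.2.2, p.1.2]
    ext : 2
    · exact shape_build d _ _ h
    · exact labels_build d _ _ h

/-- Nodup full lists are embeddings (hence permutations). -/
noncomputable def listEquiv (k : ℕ) :
    {l : List (Fin k) // l.Nodup ∧ l.length = k} ≃ (Fin k ↪ Fin k) where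
  toFun l := ⟨fun i => l.1.get (Fin.cast l.2.2.symm i), by
    have := List.nodup_iff_injective_get.mp l.2.1
    exact fun a b hab => by
      have := this hab
      simpa [Fin.ext_iff] using this⟩
  invFun f := ⟨List.ofFn f, List.nodup_ofFn.mpr f.2, by simp⟩
  left_inv l := by
    ext1
    apply List.ext_get (by simp [l.2.2])
    intro n h1 h2
    simp; rfl
  right_inv f := by
    ext i
    simp

theorem fact_aux (n : ℕ) :
    2 ^ n * (∏ i ∈ Finset.range n, (2 * i + 1)) * n.factorial = (2 * n).factorial := by
  induction n with
  | zero => rfl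
  | succ n ih =>
      have h2 : 2 * (n + 1) = (2 * n + 1) + 1 := by ring
      rw [Finset.prod_range_succ, pow_succ, Nat.factorial_succ, h2, Nat.factorial_succ,
        Nat.factorial_succ, ← ih]
      ring

theorem catalan_aux (n : ℕ) :
    catalan n * (n + 1).factorial = 2 ^ n * ∏ i ∈ Finset.range n, (2 * i + 1) := by
  apply Nat.eq_of_mul_eq_mul_right (Nat.factorial_pos n)
  rw [fact_aux]
  have h1 : catalan n * (n + 1).factorial * n.factorial
      = ((n + 1) * catalan n) * n.factorial * n.factorial := by
    rw [Nat.factorial_succ]; ring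
  rw [h1, succ_mul_catalan_eq_centralBinom, Nat.centralBinom]
  have := Nat.choose_mul_factorial_mul_factorial (n := 2 * n) (k := n) (by omega)
  have h2 : 2 * n - n = n := by omega
  rw [h2] at this
  rw [this]

end PTreeAux

/-- The number of proper `k`-trees equals `2^(k-1) · ∏_{i=1}^{k-1} (2i-1)`. -/
theorem count_proper_k_trees (k : ℕ) (hk : 1 ≤ k) :
    Nat.card {t : PTree k // t.IsProper} =
      2 ^ (k - 1) * ∏ i ∈ Finset.range (k - 1), (2 * i + 1) := by
  obtain ⟨n, rfl⟩ : ∃ n, k = n + 1 := ⟨k - 1, by omega⟩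
  have d : Fin (n + 1) := ⟨0, by omega⟩
  rw [Nat.card_congr (PTreeAux.properEquiv (n + 1) d), Nat.card_prod,
    Nat.card_congr (PTreeAux.listEquiv (n + 1))]
  have hshape : Nat.card {s : Tree Unit // s.numLeaves = n + 1} = catalan n := by
    rw [Nat.card_congr (Equiv.subtypeEquivRight (q := fun s : Tree Unit =>
      s ∈ Tree.treesOfNumNodesEq n) (fun s => by
        simp only [BinaryTree.mem_treesOfNumNodesEq, BinaryTree.numLeaves_eq_numNodes_succ]; omega))]
    rw [Nat.card_eq_fintype_card, Fintype.card_coe, BinaryTree.treesOfNumNodesEq_card_eq_catalan]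
  rw [hshape, Nat.card_eq_fintype_card, Fintype.card_embedding_eq, Fintype.card_fin,
    Nat.descFactorial_self]
  simpa using PTreeAux.catalan_aux n
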